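/- Let (X,d) be a metric space and T₁, …, T_r : X → X mappings each satisfying property (P₁). If ⋂_{i=1}^r Fix(T_i) ≠ ∅, then ⋂_{i=1}^r Fix(T_i) = Fix(T₁ ∘ ⋯ ∘ T_r). -/

import Mathlib

open Set

/-- The composition `T 0 ∘ T 1 ∘ ⋯ ∘ T (r-1)` of a finite family of self-maps. -/
def compFam {X : Type*} {r : ℕ} (T : Fin r → X → X) : X → X :=
  (List.ofFn T).foldr (· ∘ ·) id

lemma foldr_fix {X : Type*} (L : List (X → X)) (x : X) (h : ∀ f ∈ L, f x = x) :
    L.foldr (· ∘ ·) id x = x := by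
  induction L with
  | nil => rfl
  | cons f L ih =>
    simp only [List.foldr_cons, Function.comp_apply,
      ih (fun g hg => h g (List.mem_cons_of_mem f hg)), h f List.mem_cons_self]

/-- If `T₁, …, T_r` satisfy property (P₁) and have a common fixed point, then
`⋂ Fix(T_i) = Fix(T₁ ∘ ⋯ ∘ T_r)`. -/
theorem fixed_points_of_composition {X : Type*} [MetricSpace X]
    {r : ℕ} (T : Fin r → X → X)
    (hP1 : ∀ i : Fin r, ∃ l > (0:ℝ), ∃ β > (0:ℝ), (∃ u, T i u = u) ∧
      ∀ x u : X, T i u = u →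
        dist (T i x) u ^ l ≤ dist x u ^ l - β * dist (T i x) x ^ l)
    (hcommon : ∃ u : X, ∀ i, T i u = u) :
    {x : X | ∀ i, T i x = x} = {x : X | compFam T x = x} := by
  obtain ⟨u, hu⟩ := hcommon
  ext x
  simp only [mem_setOf_eq]
  constructor
  · intro hx
    show (List.ofFn T).foldr (· ∘ ·) id x = x
    exact foldr_fix _ x (by
      intro f hf
      obtain ⟨i, rfl⟩ := List.mem_ofFn.mp hf
      exact hx i)
  · intro hx
    -- key consequences of (P₁)
    have keyA : ∀ (i : Fin r) (z : X), dist (T i z) u ≤ dist z u := by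
      intro i z
      obtain ⟨l, hl, β, hβ, -, hineq⟩ := hP1 i
      have h1 := hineq z u (hu i)
      have h2 : (0:ℝ) ≤ β * dist (T i z) z ^ l := by
        have := Real.rpow_nonneg (dist_nonneg (x := T i z) (y := z)) l
        nlinarith
      have h3 : dist (T i z) u ^ l ≤ dist z u ^ l := by linarith
      exact (Real.rpow_le_rpow_iff dist_nonneg dist_nonneg hl).mp h3
    have keyB : ∀ (i : Fin r) (z : X), dist (T i z) u = dist z u → T i z = z := by
      intro i z hz
      obtain ⟨l, hl, β, hβ, -, hineq⟩ := hP1 i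
      have h1 := hineq z u (hu i)
      rw [hz] at h1
      have h2 : dist (T i z) z ^ l ≤ 0 := by nlinarith
      have h3 : dist (T i z) z ^ l = 0 :=
        le_antisymm h2 (Real.rpow_nonneg dist_nonneg l)
      have h4 : dist (T i z) z = 0 :=
        (Real.rpow_eq_zero dist_nonneg (ne_of_gt hl)).mp h3
      exact dist_eq_zero.mp h4
    -- the partial orbits
    set y : ℕ → X := fun i => ((List.ofFn T).drop i).foldr (· ∘ ·) id x with hy
    have hy0 : y 0 = x := hx
    have hyr : ∀ i, r ≤ i → y i = x := by
      intro i hi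
      have : (List.ofFn T).drop i = [] := by
        apply List.drop_eq_nil_of_le
        simpa using hi
      simp [hy, this]
    have hstep : ∀ i (h : i < r), y i = T ⟨i, h⟩ (y (i + 1)) := by
      intro i h
      have hlen : i < (List.ofFn T).length := by simpa using h
      have := List.drop_eq_getElem_cons hlen
      simp only [hy, this, List.foldr_cons, Function.comp_apply, List.getElem_ofFn]
    have hmono : ∀ i, dist (y i) u ≤ dist (y (i + 1)) u := by
      intro i
      rcases lt_or_ge i r with h | h
      · rw [hstep i h]; exact keyA _ _
      · rw [hyr i h, hyr (i + 1) (le_trans h (Nat.le_succ i))]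
    have hchain : ∀ i j, i ≤ j → dist (y i) u ≤ dist (y j) u := by
      intro i j hij
      induction j with
      | zero => simp_all
      | succ j ih =>
        rcases Nat.lt_or_ge i (j + 1) with h | h
        · exact le_trans (ih (Nat.lt_succ_iff.mp h)) (hmono j)
        · have : i = j + 1 := le_antisymm hij h
          rw [this]
    have heq : ∀ i, i ≤ r → dist (y i) u = dist x u := by
      intro i hi
      refine le_antisymm ?_ ?_
      · have := hchain i r hi; rwa [hyr r le_rfl] at this
      · have := hchain 0 i (Nat.zero_le i); rwa [hy0] at this
    have hfix : ∀ i (h : i < r), y i = y (i + 1) := by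
      intro i h
      have h1 : dist (T ⟨i, h⟩ (y (i + 1))) u = dist (y (i + 1)) u := by
        rw [← hstep i h, heq i (le_of_lt h), heq (i + 1) h]
      rw [hstep i h, keyB _ _ h1]
    have hsub : ∀ k, y (r - k) = x := by
      intro k
      induction k with
      | zero => exact hyr r le_rfl
      | succ k ih =>
        rcases Nat.lt_or_ge k r with h | h
        · have h2 : r - (k + 1) < r := by omega
          have h3 : r - (k + 1) + 1 = r - k := by omega
          rw [hfix _ h2, h3, ih]
        · have : r - (k + 1) = r - k := by omega
          rw [this, ih]
    have hally : ∀ i, i ≤ r → y i = x := by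
      intro i hi
      have := hsub (r - i)
      rwa [Nat.sub_sub_self hi] at this
    intro i
    have h1 : y i.val = x := hally i.val (le_of_lt i.isLt)
    have h2 : y (i.val + 1) = x := hally (i.val + 1) i.isLt
    have := hstep i.val i.isLt
    rw [h1, h2, Fin.eta] at this
    exact this.symm
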